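/- The function P(x) := x²·sin x/(sin x − x·cos x) is positive and strictly decreasing on the open interval (0, π/2). -/

import Mathlib

open Real Set

private lemma lemA : ∀ y ∈ Ioo (0:ℝ) π, 0 < sin y - y * cos y := by
  have hd : ∀ y : ℝ, HasDerivAt (fun y => sin y - y * cos y) (y * sin y) y := by
    intro y
    have h := (Real.hasDerivAt_sin y).sub ((hasDerivAt_id y).mul (Real.hasDerivAt_cos y))
    refine h.congr_deriv ?_
    try simp only [id_eq]
    ring
  have hmono : StrictMonoOn (fun y => sin y - y * cos y) (Icc 0 π) := by
    apply strictMonoOn_of_deriv_pos (convex_Icc 0 π)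
    · exact (Real.continuous_sin.sub (continuous_id.mul Real.continuous_cos)).continuousOn
    · intro y hy
      rw [interior_Icc] at hy
      rw [(hd y).deriv]
      exact mul_pos hy.1 (Real.sin_pos_of_pos_of_lt_pi hy.1 hy.2)
  intro y hy
  have h0 : (fun y => sin y - y * cos y) 0 < (fun y => sin y - y * cos y) y :=
    hmono (left_mem_Icc.2 Real.pi_pos.le) (Ioo_subset_Icc_self hy) hy.1
  simpa using h0

private lemma lemB : ∀ x ∈ Ioo (0:ℝ) (π/2), 0 < 1 - cos (2*x) - x * sin (2*x) := by
  have hd : ∀ x : ℝ, HasDerivAt (fun x => 1 - cos (2*x) - x * sin (2*x))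
      (sin (2*x) - 2*x * cos (2*x)) x := by
    intro x
    have h2x : HasDerivAt (fun x : ℝ => 2*x) 2 x := by
      simpa using (hasDerivAt_id x).const_mul 2
    have h := ((hasDerivAt_const x (1:ℝ)).sub h2x.cos).sub
      ((hasDerivAt_id x).mul h2x.sin)
    refine h.congr_deriv ?_
    try simp only [id_eq]
    ring
  have hmono : StrictMonoOn (fun x => 1 - cos (2*x) - x * sin (2*x)) (Icc 0 (π/2)) := by
    apply strictMonoOn_of_deriv_pos (convex_Icc 0 (π/2))
    · fun_prop
    · intro x hx
      rw [interior_Icc] at hx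
      rw [(hd x).deriv]
      have h2x : 2*x ∈ Ioo (0:ℝ) π := ⟨by linarith [hx.1], by linarith [hx.2]⟩
      have := lemA (2*x) h2x
      linarith
  intro x hx
  have h0 := hmono (left_mem_Icc.2 (by positivity)) (Ioo_subset_Icc_self hx) hx.1
  simpa using h0

private lemma lemC : ∀ x ∈ Ioo (0:ℝ) (π/2), 0 < 2*x - (3/2) * sin (2*x) + x * cos (2*x) := by
  have hd : ∀ x : ℝ, HasDerivAt (fun x => 2*x - (3/2) * sin (2*x) + x * cos (2*x))
      (2 * (1 - cos (2*x) - x * sin (2*x))) x := by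
    intro x
    have h2x : HasDerivAt (fun x : ℝ => 2*x) 2 x := by
      simpa using (hasDerivAt_id x).const_mul 2
    have h := (h2x.sub (h2x.sin.const_mul (3/2))).add ((hasDerivAt_id x).mul h2x.cos)
    refine h.congr_deriv ?_
    try simp only [id_eq]
    ring
  have hmono : StrictMonoOn (fun x => 2*x - (3/2) * sin (2*x) + x * cos (2*x)) (Icc 0 (π/2)) := by
    apply strictMonoOn_of_deriv_pos (convex_Icc 0 (π/2))
    · fun_prop
    · intro x hx
      rw [interior_Icc] at hx
      rw [(hd x).deriv]
      have := lemB x hx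
      linarith
  intro x hx
  have h0 := hmono (left_mem_Icc.2 (by positivity)) (Ioo_subset_Icc_self hx) hx.1
  simpa using h0

private lemma lemD : ∀ x ∈ Ioo (0:ℝ) (π/2), 0 < x^2 + (x/2) * sin (2*x) - 1 + cos (2*x) := by
  have hd : ∀ x : ℝ, HasDerivAt (fun x => x^2 + (x/2) * sin (2*x) - 1 + cos (2*x))
      (2*x - (3/2) * sin (2*x) + x * cos (2*x)) x := by
    intro x
    have h2x : HasDerivAt (fun x : ℝ => 2*x) 2 x := by
      simpa using (hasDerivAt_id x).const_mul 2
    have hhalf : HasDerivAt (fun x : ℝ => x/2) (1/2) x := by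
      simpa using (hasDerivAt_id x).div_const 2
    have h := (((hasDerivAt_pow 2 x).add (hhalf.mul h2x.sin)).sub
      (hasDerivAt_const x (1:ℝ))).add h2x.cos
    refine h.congr_deriv ?_
    try simp only [id_eq]
    ring
  have hmono : StrictMonoOn (fun x => x^2 + (x/2) * sin (2*x) - 1 + cos (2*x)) (Icc 0 (π/2)) := by
    apply strictMonoOn_of_deriv_pos (convex_Icc 0 (π/2))
    · fun_prop
    · intro x hx
      rw [interior_Icc] at hx
      rw [(hd x).deriv]
      exact lemC x hx
  intro x hx
  have h0 := hmono (left_mem_Icc.2 (by positivity)) (Ioo_subset_Icc_self hx) hx.1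
  simpa using h0

private lemma denom_pos : ∀ x ∈ Ioo (0:ℝ) (π/2), 0 < sin x - x * cos x := by
  intro x hx
  exact lemA x ⟨hx.1, lt_trans hx.2 (half_lt_self Real.pi_pos)⟩

theorem P_pos_strictAntiOn :
    (∀ x ∈ Ioo 0 (π / 2), 0 < x ^ 2 * sin x / (sin x - x * cos x)) ∧
    StrictAntiOn (fun x : ℝ => x ^ 2 * sin x / (sin x - x * cos x)) (Ioo 0 (π / 2)) := by
  constructor
  · intro x hx
    have hs : 0 < sin x := Real.sin_pos_of_pos_of_lt_pi hx.1
      (lt_trans hx.2 (half_lt_self Real.pi_pos))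
    exact div_pos (mul_pos (pow_pos hx.1 2) hs) (denom_pos x hx)
  · apply strictAntiOn_of_deriv_neg (convex_Ioo 0 (π/2))
    · intro x hx
      exact (((continuous_pow 2).continuousAt.mul Real.continuous_sin.continuousAt).div
        ((Real.continuous_sin.sub (continuous_id.mul Real.continuous_cos)).continuousAt)
        (ne_of_gt (denom_pos x hx))).continuousWithinAt
    · intro x hx
      rw [interior_Ioo] at hx
      have hDpos := denom_pos x hx
      have hne : sin x - x * cos x ≠ 0 := ne_of_gt hDpos
      have hN : HasDerivAt (fun x : ℝ => x ^ 2 * sin x) (2*x*sin x + x^2*cos x) x := by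
        have h := (hasDerivAt_pow 2 x).mul (Real.hasDerivAt_sin x)
        refine h.congr_deriv ?_
        try simp only [id_eq]
        ring
      have hDd : HasDerivAt (fun x : ℝ => sin x - x * cos x) (x * sin x) x := by
        have h := (Real.hasDerivAt_sin x).sub ((hasDerivAt_id x).mul (Real.hasDerivAt_cos x))
        refine h.congr_deriv ?_
        try simp only [id_eq]
        ring
      have hdf : HasDerivAt (fun x : ℝ => x ^ 2 * sin x / (sin x - x * cos x))
          (((2*x*sin x + x^2*cos x) * (sin x - x*cos x) - x^2*sin x*(x*sin x)) /
            (sin x - x*cos x)^2) x := hN.div hDd hne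
      rw [hdf.deriv]
      apply div_neg_of_neg_of_pos
      · -- numerator negative
        have hpos : 0 < x^2 + x * sin x * cos x - 2 * sin x ^ 2 := by
          have h3 := lemD x hx
          rw [Real.sin_two_mul, Real.cos_two_mul] at h3
          nlinarith [Real.sin_sq_add_cos_sq x]
        have key : (2*x*sin x + x^2*cos x) * (sin x - x*cos x) - x^2*sin x*(x*sin x)
            = -(x * (x^2 + x * sin x * cos x - 2 * sin x ^ 2)) := by
          linear_combination (-(x^3 : ℝ)) * (Real.sin_sq_add_cos_sq x)
        rw [key]
        linarith [mul_pos hx.1 hpos]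
      · positivity
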